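/- Let F be a field of characteristic 0 and c : F* × F* → {±1} bimultiplicative and antisymmetric, with the property that c(x,y)=1 for all y ∈ F* if and only if x ∈ (F*)². For b, b' ∈ (F*)ⁿ set [b,b'] = ∏_{i=1}^{n} c(bᵢ,b'ᵢ) · c(∏ᵢbᵢ, ∏ᵢb'ᵢ). Then b satisfies [b,b'] = 1 for all b' ∈ (F*)ⁿ if and only if there exist d ∈ F* with d^{n+1} ∈ (F*)² and a₁,…,a_n ∈ F* such that bᵢ = aᵢ²·d for every i. -/

import Mathlib

open Finset

/-- The commutator pairing `[b,b'] = ∏ᵢ c(bᵢ,b'ᵢ) · c(∏ᵢbᵢ, ∏ᵢb'ᵢ)` on the covered torus,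
coordinates indexed `1,…,n`. -/
def brkt {F : Type*} [Field F] (c : Fˣ → Fˣ → ℤˣ) (n : ℕ) (b b' : ℕ → Fˣ) : ℤˣ :=
  (∏ i ∈ Icc 1 n, c (b i) (b' i)) * c (∏ i ∈ Icc 1 n, b i) (∏ i ∈ Icc 1 n, b' i)

theorem stmt_5 {F : Type*} [Field F] [CharZero F] (c : Fˣ → Fˣ → ℤˣ)
    (hml : ∀ x y z : Fˣ, c (x * y) z = c x z * c y z)
    (hmr : ∀ x y z : Fˣ, c x (y * z) = c x y * c x z)
    (hanti : ∀ x y : Fˣ, c x y = (c y x)⁻¹)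
    (hker : ∀ x : Fˣ, (∀ y : Fˣ, c x y = 1) ↔ ∃ z : Fˣ, x = z ^ 2)
    (n : ℕ) (b : ℕ → Fˣ) :
    (∀ b' : ℕ → Fˣ, brkt c n b b' = 1) ↔
      ∃ d : Fˣ, (∃ e : Fˣ, d ^ (n + 1) = e ^ 2) ∧
        ∃ a : ℕ → Fˣ, ∀ i ∈ Icc 1 n, b i = (a i) ^ 2 * d := by
  classical
  have hc1l : ∀ y : Fˣ, c 1 y = 1 := by
    intro y
    have h := hml 1 1 y
    rw [one_mul] at h
    exact (left_eq_mul.mp h)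
  have hc1r : ∀ x : Fˣ, c x 1 = 1 := by
    intro x
    have h := hmr x 1 1
    rw [one_mul] at h
    exact (left_eq_mul.mp h)
  have hsq : ∀ x y : Fˣ, c (x ^ 2) y = 1 := by
    intro x y
    rw [sq, hml]
    exact Int.units_mul_self _
  have hprodl : ∀ (s : Finset ℕ) (f : ℕ → Fˣ) (y : Fˣ),
      c (∏ i ∈ s, f i) y = ∏ i ∈ s, c (f i) y := by
    intro s f y
    induction s using Finset.induction with
    | empty => simp [hc1l]
    | insert _ _ hnot ih => rw [prod_insert hnot, prod_insert hnot, hml, ih]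
  have hprodr : ∀ (s : Finset ℕ) (f : ℕ → Fˣ) (x : Fˣ),
      c x (∏ i ∈ s, f i) = ∏ i ∈ s, c x (f i) := by
    intro s f x
    induction s using Finset.induction with
    | empty => simp [hc1r]
    | insert _ _ hnot ih => rw [prod_insert hnot, prod_insert hnot, hmr, ih]
  have hpowl : ∀ (x y : Fˣ) (k : ℕ), c (x ^ k) y = (c x y) ^ k := by
    intro x y k
    induction k with
    | zero => simp [hc1l]
    | succ k ih => rw [pow_succ, pow_succ, hml, ih]
  constructor
  · intro h
    set P : Fˣ := ∏ i ∈ Icc 1 n, b i with hP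
    have hjker : ∀ j ∈ Icc 1 n, ∀ y : Fˣ, c (b j * P) y = 1 := by
      intro j hj y
      have hthis := h (fun i => if i = j then y else 1)
      unfold brkt at hthis
      have h1 : (∏ i ∈ Icc 1 n, c (b i) (if i = j then y else 1)) = c (b j) y := by
        rw [Finset.prod_eq_single j]
        · simp
        · intro i _ hij; simp [hij, hc1r]
        · intro habs; exact absurd hj habs
      have h2 : (∏ i ∈ Icc 1 n, (if i = j then y else 1 : Fˣ)) = y := by
        rw [Finset.prod_eq_single j]
        · simp
        · intro i _ hij; simp [hij]
        · intro habs; exact absurd hj habs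
      rw [h1, h2] at hthis
      rw [hml]
      exact hthis
    have hsq' : ∀ j ∈ Icc 1 n, ∃ z : Fˣ, b j * P = z ^ 2 := by
      intro j hj
      exact (hker _).mp (hjker j hj)
    set a : ℕ → Fˣ := fun j => if hj : j ∈ Icc 1 n then Classical.choose (hsq' j hj) else 1
      with ha
    have hspec : ∀ j ∈ Icc 1 n, b j * P = (a j) ^ 2 := by
      intro j hj
      have := Classical.choose_spec (hsq' j hj)
      rw [ha]; simp only [dif_pos hj]; exact this
    have hbj : ∀ j ∈ Icc 1 n, b j = (a j) ^ 2 * P⁻¹ := by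
      intro j hj
      exact eq_mul_inv_iff_mul_eq.mpr (hspec j hj)
    refine ⟨P⁻¹, ?_, a, hbj⟩
    set A : Fˣ := ∏ j ∈ Icc 1 n, a j with hA
    have hPeq : P = A ^ 2 * (P⁻¹) ^ n := by
      calc P = ∏ j ∈ Icc 1 n, b j := hP
        _ = ∏ j ∈ Icc 1 n, (a j ^ 2 * P⁻¹) := Finset.prod_congr rfl hbj
        _ = (∏ j ∈ Icc 1 n, a j) ^ 2 * (P⁻¹) ^ (Icc 1 n).card := by
              rw [Finset.prod_mul_distrib, Finset.prod_pow, Finset.prod_const]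
        _ = A ^ 2 * (P⁻¹) ^ n := by rw [hA, Nat.card_Icc]; simp
    refine ⟨A⁻¹, ?_⟩
    have h'' : (P⁻¹) ^ n = (A ^ 2)⁻¹ * P := by
      rw [eq_inv_mul_iff_mul_eq]; exact hPeq.symm
    rw [pow_succ, h'']
    group
  · rintro ⟨d, ⟨e, he⟩, a, habd⟩ b'
    unfold brkt
    have key : ∀ i ∈ Icc 1 n, c (b i) (b' i) = c d (b' i) := by
      intro i hi
      rw [habd i hi, hml, hsq, one_mul]
    have key2 : ∀ i ∈ Icc 1 n, c (b i) (∏ j ∈ Icc 1 n, b' j) =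
        c d (∏ j ∈ Icc 1 n, b' j) := by
      intro i hi
      rw [habd i hi, hml, hsq, one_mul]
    rw [Finset.prod_congr rfl key, hprodl, Finset.prod_congr rfl key2,
      Finset.prod_const, Nat.card_Icc]
    have : ∏ i ∈ Icc 1 n, c d (b' i) = c d (∏ i ∈ Icc 1 n, b' i) := (hprodr _ _ _).symm
    rw [this, ← pow_succ', ← hpowl]
    simp only [Nat.add_sub_cancel]
    rw [he, hsq]
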